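/- Correctness of asynchronous FloodSet (all-ones case): consider a run of the FloodSet global machine of dimension n in which every automaton starts in state i₁ (input bit 1). Then no automaton ever broadcasts 0 nor reaches state o₀; hence at every time each automaton is in state i₁ or o₁, and if additionally every non-idle-forever automaton eventually fires its initial broadcast, then eventually all automata are in state o₁. -/
import Mathlib


/-- States of the FloodSet protocol. -/
inductive FState where
  | i0 | i1 | o0 | o1
deriving DecidableEq

/-- Actions: broadcasts `b0, b1` (messages 0,1) and reactions `r0, r1` (0̄, 1̄). -/
inductive FAct where
  | b0 | b1 | r0 | r1
deriving DecidableEq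

/-- Broadcast messages 0 and 1. -/
inductive FMsg where
  | m0 | m1
deriving DecidableEq

/-- The FloodSet transition relation. -/
def ftau (q : FState) (a : FAct) (r : FState) : Prop :=
  (q = .i0 ∧ a = .b0 ∧ r = .o0) ∨
  (q = .o0 ∧ a = .r0 ∧ r = .o0) ∨
  (q = .o0 ∧ a = .r1 ∧ r = .o0) ∨
  (q = .i1 ∧ a = .b1 ∧ r = .o1) ∨
  (q = .o1 ∧ a = .r0 ∧ r = .o0) ∨
  (q = .o1 ∧ a = .r1 ∧ r = .o1)

/-- correctness of asynchronous FloodSet, all-ones case.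
In a run where every automaton starts in `i₁`, no automaton ever broadcasts 0
nor reaches `o₀`; every automaton is always in `i₁` or `o₁`; and under the
fairness assumption (every automaton eventually fires while still in its
initial state) eventually all automata are in `o₁` forever. -/
theorem stmt_11 (n : ℕ)
    (s : ℕ → Fin n → FState) (σ : ℕ → Fin n → Option FAct)
    (E : ℕ → Set FMsg) (Delivered : ℕ → Set FMsg)
    (hrun : ∀ i j, (∀ a, σ i j = some a → ftau (s i j) a (s (i + 1) j)) ∧
      (σ i j = none → s i j = s (i + 1) j))
    (hE0 : E 0 = ∅)
    (hrec : ∀ i, E (i + 1) =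
      (E i ∪ {m : FMsg | (m = .m0 ∧ ∃ j, σ i j = some .b0) ∨
                          (m = .m1 ∧ ∃ j, σ i j = some .b1)}) \ Delivered i)
    (hrecv0 : ∀ i j, σ i j = some .r0 → (FMsg.m0 ∈ E i ∨ ∃ k, σ i k = some .b0))
    (hrecv1 : ∀ i j, σ i j = some .r1 → (FMsg.m1 ∈ E i ∨ ∃ k, σ i k = some .b1))
    (hinit : ∀ j, s 0 j = .i1) :
    (∀ i j, σ i j ≠ some .b0) ∧
    (∀ i j, s i j ≠ .o0) ∧
    (∀ i j, s i j = .i1 ∨ s i j = .o1) ∧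
    ((∀ j, ∃ i, σ i j ≠ none ∧ (s i j = .i0 ∨ s i j = .i1)) →
      ∃ t, ∀ l, t ≤ l → ∀ j, s l j = .o1) := by

  have key : ∀ i, (∀ j, s i j = .i1 ∨ s i j = .o1) ∧ FMsg.m0 ∉ E i := by
    intro i
    induction i with
    | zero => exact ⟨fun j => Or.inl (hinit j), by simp [hE0]⟩
    | succ i ih =>
      obtain ⟨hs, hE⟩ := ih
      have hnob0 : ∀ j, σ i j ≠ some .b0 := by
        intro j hb
        have ht := (hrun i j).1 _ hb
        rcases hs j with h | h <;> simp [ftau, h] at ht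
      refine ⟨?_, ?_⟩
      · intro j
        rcases h : σ i j with _ | a
        · rw [← (hrun i j).2 h]; exact hs j
        · have ht := (hrun i j).1 a h
          cases a with
          | b0 => exact absurd h (hnob0 j)
          | b1 =>
            rcases hs j with h1 | h1 <;> simp [ftau, h1] at ht <;> tauto
          | r0 =>
            rcases hrecv0 i j h with hm | ⟨k, hk⟩
            · exact absurd hm hE
            · exact absurd hk (hnob0 k)
          | r1 =>
            rcases hs j with h1 | h1 <;> simp [ftau, h1] at ht <;> tauto
      · rw [hrec i]
        rintro ⟨hm, -⟩
        rcases hm with hm' | hm'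
        · exact hE hm'
        · rcases hm' with ⟨-, k, hk⟩ | ⟨heq, -⟩
          · exact hnob0 k hk
          · exact FMsg.noConfusion heq
  have hnob0 : ∀ i j, σ i j ≠ some .b0 := by
    intro i j hb
    have ht := (hrun i j).1 _ hb
    rcases (key i).1 j with h | h <;> simp [ftau, h] at ht
  have stay : ∀ j i, s i j = .o1 → s (i + 1) j = .o1 := by
    intro j i h1
    rcases h : σ i j with _ | a
    · rw [← (hrun i j).2 h]; exact h1
    · have ht := (hrun i j).1 a h
      cases a with
      | b0 => exact absurd h (hnob0 i j)
      | b1 => simp [ftau, h1] at ht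
      | r0 =>
        rcases hrecv0 i j h with hm | ⟨k, hk⟩
        · exact absurd hm (key i).2
        · exact absurd hk (hnob0 i k)
      | r1 => simp [ftau, h1] at ht; tauto
  refine ⟨hnob0, ?_, fun i j => (key i).1 j, ?_⟩
  · intro i j h
    rcases (key i).1 j with h1 | h1 <;> simp [h] at h1
  · intro hfair
    have hfire : ∀ j, ∃ i, s (i + 1) j = .o1 := by
      intro j
      obtain ⟨i, hne, -⟩ := hfair j
      rcases h : σ i j with _ | a
      · exact absurd h hne
      · have ht := (hrun i j).1 a h
        refine ⟨i, ?_⟩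
        cases a with
        | b0 => exact absurd h (hnob0 i j)
        | b1 =>
          rcases (key i).1 j with h1 | h1 <;> simp [ftau, h1] at ht <;> tauto
        | r0 =>
          rcases hrecv0 i j h with hm | ⟨k, hk⟩
          · exact absurd hm (key i).2
          · exact absurd hk (hnob0 i k)
        | r1 =>
          rcases (key i).1 j with h1 | h1 <;> simp [ftau, h1] at ht <;> tauto
    choose f hf using hfire
    refine ⟨Finset.univ.sup (fun j => f j + 1), fun l hl j => ?_⟩
    have hle : f j + 1 ≤ l := le_trans (Finset.le_sup (f := fun j => f j + 1) (Finset.mem_univ j)) hl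
    have : ∀ m, f j + 1 ≤ m → s m j = .o1 := by
      intro m hm
      induction m, hm using Nat.le_induction with
      | base => exact hf j
      | succ m _ ih => exact stay j m ih
    exact this l hle
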